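/- Let Δ, v, w be positive reals and define f : ℝ → ℝ by f(y) = v·y for y ∈ [0, Δ/v] and f(y) = Δ − w·(y − Δ/v) for y ∈ (Δ/v, Δ/v + Δ/w]. Then the pushforward under f of the uniform probability measure on [0, Δ/v + Δ/w] is the uniform probability measure on [0, Δ]. -/

import Mathlib

open MeasureTheory

theorem stmt_18 (Δ v w : ℝ) (hΔ : 0 < Δ) (hv : 0 < v) (hw : 0 < w)
    (f : ℝ → ℝ)
    (hf : ∀ y, f y = if y ≤ Δ / v then v * y else Δ - w * (y - Δ / v)) :
    Measure.map f
        ((ENNReal.ofReal (Δ / v + Δ / w))⁻¹ •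
          volume.restrict (Set.Icc (0:ℝ) (Δ / v + Δ / w))) =
      (ENNReal.ofReal Δ)⁻¹ • volume.restrict (Set.Icc (0:ℝ) Δ) := by
  set a := Δ / v with ha
  set T := Δ / v + Δ / w with hTdef
  have hav : 0 < a := div_pos hΔ hv
  have hwd : 0 < Δ / w := div_pos hΔ hw
  have haT : a < T := lt_add_of_pos_right a hwd
  -- f is measurable
  have hfeq : f = fun y => if y ≤ a then v * y else Δ - w * (y - a) := funext hf
  have hfm : Measurable f := by
    rw [hfeq]
    exact Measurable.ite measurableSet_Iic (by fun_prop) (by fun_prop)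
  -- the two affine pieces
  set g : ℝ → ℝ := fun y => v * y with hg
  set h : ℝ → ℝ := fun y => Δ - w * (y - a) with hh
  have hgm : Measurable g := by fun_prop
  have hhm : Measurable h := by fun_prop
  -- split the restricted measure
  have hdisj : Disjoint (Set.Icc (0:ℝ) a) (Set.Ioc a T) := by
    rw [Set.disjoint_left]
    rintro x ⟨_, hx2⟩ ⟨hx3, _⟩
    exact absurd hx2 (not_le.mpr hx3)
  have hunion : Set.Icc (0:ℝ) a ∪ Set.Ioc a T = Set.Icc 0 T :=
    Set.Icc_union_Ioc_eq_Icc hav.le haT.le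
  have hsplit : volume.restrict (Set.Icc (0:ℝ) T)
      = volume.restrict (Set.Icc (0:ℝ) a) + volume.restrict (Set.Ioc a T) := by
    rw [← hunion, Measure.restrict_union hdisj measurableSet_Ioc]
  -- map of the measures on each piece
  have hmapg : Measure.map g volume = ENNReal.ofReal v⁻¹ • volume := by
    rw [hg]
    have := Real.map_volume_mul_left hv.ne'
    simpa [abs_of_pos (inv_pos.mpr hv)] using this
  have hmaph : Measure.map h volume = ENNReal.ofReal w⁻¹ • volume := by
    have hcomp : h = (fun x => (Δ + w * a) + x) ∘ (fun y => (-w) * y) := by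
      funext y; simp [hh]; ring
    rw [hcomp, ← Measure.map_map (by fun_prop) (by fun_prop),
      Real.map_volume_mul_left (by linarith : (-w : ℝ) ≠ 0), Measure.map_smul,
      map_add_left_eq_self]
    congr 1
    rw [abs_inv, abs_neg, abs_of_pos hw]
  -- embeddings
  have hge : MeasurableEmbedding g := measurableEmbedding_mulLeft₀ hv.ne'
  have hhe : MeasurableEmbedding h := by
    have hcomp : h = (fun x => (Δ + w * a) + x) ∘ (fun y => (-w) * y) := by
      funext y; simp [hh]; ring
    rw [hcomp]
    exact (measurableEmbedding_addLeft _).comp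
      (measurableEmbedding_mulLeft₀ (by linarith : (-w : ℝ) ≠ 0))
  -- preimages of Icc 0 Δ
  have hpre_g : g ⁻¹' Set.Icc 0 Δ = Set.Icc 0 a := by
    rw [hg, Set.preimage_const_mul_Icc₀ _ _ hv, zero_div, ha]
  have hpre_h : h ⁻¹' Set.Icc 0 Δ = Set.Icc a T := by
    ext y
    simp only [hh, Set.mem_preimage, Set.mem_Icc]
    constructor
    · rintro ⟨h1, h2⟩
      constructor
      · nlinarith
      · rw [hTdef]
        have : w * (y - a) ≤ Δ := by linarith
        rw [← ha]
        have : y - a ≤ Δ / w := (le_div_iff₀ hw).mpr (by linarith)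
        linarith
    · rintro ⟨h1, h2⟩
      have hya : 0 ≤ y - a := by linarith
      have : y - a ≤ Δ / w := by
        rw [hTdef, ← ha] at h2; linarith
      have hmul : (y - a) * w ≤ Δ := (le_div_iff₀ hw).mp this
      have : w * (y - a) ≤ Δ := by linarith [mul_comm (y - a) w, hmul]
      constructor
      · linarith
      · nlinarith
  -- compute the map on each piece
  have hpart1 : Measure.map f (volume.restrict (Set.Icc (0:ℝ) a))
      = ENNReal.ofReal v⁻¹ • volume.restrict (Set.Icc (0:ℝ) Δ) := by
    have hfg : f =ᵐ[volume.restrict (Set.Icc (0:ℝ) a)] g := by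
      refine Filter.eventuallyEq_of_mem (self_mem_ae_restrict measurableSet_Icc) ?_
      intro y hy
      rw [hfeq]
      simp only [hg]
      rw [if_pos hy.2]
    rw [Measure.map_congr hfg, ← hpre_g, ← hge.restrict_map, hmapg,
      Measure.restrict_smul]
  have hpart2 : Measure.map f (volume.restrict (Set.Ioc a T))
      = ENNReal.ofReal w⁻¹ • volume.restrict (Set.Icc (0:ℝ) Δ) := by
    have hfh : f =ᵐ[volume.restrict (Set.Ioc a T)] h := by
      refine Filter.eventuallyEq_of_mem (self_mem_ae_restrict measurableSet_Ioc) ?_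
      intro y hy
      rw [hfeq]
      simp only [hh]
      rw [if_neg (not_le.mpr hy.1)]
    have hrw : volume.restrict (Set.Ioc a T) = volume.restrict (Set.Icc a T) :=
      Measure.restrict_congr_set Ioc_ae_eq_Icc
    rw [Measure.map_congr hfh, hrw, ← hpre_h, ← hhe.restrict_map, hmaph,
      Measure.restrict_smul]
  -- combine
  rw [Measure.map_smul, hsplit, Measure.map_add _ _ hfm, hpart1, hpart2,
    ← add_smul, smul_smul]
  congr 1
  have hvw : (0:ℝ) < v⁻¹ + w⁻¹ := by positivity
  have hT : T = Δ * (v⁻¹ + w⁻¹) := by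
    rw [hTdef]; field_simp
  rw [← ENNReal.ofReal_add (by positivity) (by positivity), hT,
    ENNReal.ofReal_mul hΔ.le, ENNReal.mul_inv (Or.inl (by simp [ENNReal.ofReal_eq_zero, not_le, hΔ]))
      (Or.inl ENNReal.ofReal_ne_top), mul_assoc,
    ENNReal.inv_mul_cancel (by simp [hvw]) ENNReal.ofReal_ne_top, mul_one]
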